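/- Let P, Q be pmfs on a finite set Ω with Q(ω) > 0 whenever P(ω) > 0, and let A ⊆ Ω be an event. Then -log Q(A) ≤ D(P_A ‖ Q) where P_A(ω) := P(ω)1{ω∈A}/P(A) is P conditioned on A (assuming P(A) > 0), and D(P_A ‖ Q) ≤ D(P_A ‖ P) + ∑_ω P_A(ω) log(P(ω)/Q(ω)). -/

import Mathlib

open scoped Classical

/-- Change-of-measure bound for the Stein exponent. `P_A ω = P ω / P(A)` on `A`. -/
theorem stein_change_of_measure
    {Ω : Type*} [Fintype Ω]
    (P Q : Ω → ℝ)
    (hP0 : ∀ ω, 0 ≤ P ω) (hP1 : ∑ ω, P ω = 1)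
    (hQ0 : ∀ ω, 0 ≤ Q ω) (hQ1 : ∑ ω, Q ω = 1)
    (habs : ∀ ω, 0 < P ω → 0 < Q ω)
    (A : Finset Ω) (hPA : 0 < ∑ ω ∈ A, P ω) :
    (-Real.log (∑ ω ∈ A, Q ω)
        ≤ ∑ ω ∈ A, (P ω / (∑ ω' ∈ A, P ω'))
            * Real.log ((P ω / (∑ ω' ∈ A, P ω')) / Q ω))
    ∧ (∑ ω ∈ A, (P ω / (∑ ω' ∈ A, P ω'))
            * Real.log ((P ω / (∑ ω' ∈ A, P ω')) / Q ω)
        ≤ (∑ ω ∈ A, (P ω / (∑ ω' ∈ A, P ω'))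
              * Real.log ((P ω / (∑ ω' ∈ A, P ω')) / P ω))
          + ∑ ω ∈ A, (P ω / (∑ ω' ∈ A, P ω')) * Real.log (P ω / Q ω)) := by
  set s : ℝ := ∑ ω ∈ A, P ω with hs
  have hs0 : 0 < s := hPA
  -- p ω := P ω / s
  set p : Ω → ℝ := fun ω => P ω / s with hp
  have hpsum : ∑ ω ∈ A, p ω = 1 := by
    simp [hp, ← Finset.sum_div, div_self hs0.ne']
    exact div_self hs0.ne'
  have hp0 : ∀ ω, 0 ≤ p ω := fun ω => div_nonneg (hP0 ω) hs0.le
  -- Q(A) > 0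
  have hQA : 0 < ∑ ω ∈ A, Q ω := by
    obtain ⟨ω, hωA, hωP⟩ : ∃ ω ∈ A, 0 < P ω := by
      by_contra h
      push_neg at h
      exact absurd (Finset.sum_nonpos h) (not_le.mpr hs0)
    exact Finset.sum_pos' (fun ω _ => hQ0 ω)
      ⟨ω, hωA, habs ω hωP⟩
  set QA : ℝ := ∑ ω ∈ A, Q ω with hQAdef
  constructor
  · -- key: ∑ p ω * (log (Q ω / p ω) - log QA) ≤ 0
    have key : ∑ ω ∈ A, p ω * (Real.log (Q ω / p ω) - Real.log QA) ≤ 0 := by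
      have hbound : ∀ ω ∈ A,
          p ω * (Real.log (Q ω / p ω) - Real.log QA) ≤ Q ω / QA - p ω := by
        intro ω hω
        rcases eq_or_lt_of_le (hp0 ω) with h0 | h0
        · have h1 : p ω = 0 := h0.symm
          rw [h1, zero_mul, sub_zero]
          exact div_nonneg (hQ0 ω) hQA.le
        · have hPω : 0 < P ω := by
            by_contra h
            have : P ω = 0 := le_antisymm (not_lt.mp h) (hP0 ω)
            simp [hp, this] at h0
          have hQω : 0 < Q ω := habs ω hPω
          have hx : 0 < Q ω / (p ω * QA) := by positivity
          have hlog : Real.log (Q ω / (p ω * QA)) ≤ Q ω / (p ω * QA) - 1 :=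
            Real.log_le_sub_one_of_pos hx
          have heq : Real.log (Q ω / p ω) - Real.log QA
              = Real.log (Q ω / (p ω * QA)) := by
            rw [Real.log_div hQω.ne' (mul_pos h0 hQA).ne',
              Real.log_mul h0.ne' hQA.ne', Real.log_div hQω.ne' h0.ne']
            ring
          rw [heq]
          calc p ω * Real.log (Q ω / (p ω * QA))
              ≤ p ω * (Q ω / (p ω * QA) - 1) := by
                exact mul_le_mul_of_nonneg_left hlog (hp0 ω)
            _ = Q ω / QA - p ω := by
                field_simp
      calc ∑ ω ∈ A, p ω * (Real.log (Q ω / p ω) - Real.log QA)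
          ≤ ∑ ω ∈ A, (Q ω / QA - p ω) := Finset.sum_le_sum hbound
        _ = 0 := by
            rw [Finset.sum_sub_distrib, ← Finset.sum_div, hpsum]
            simp [hQAdef, div_self hQA.ne']
            exact sub_eq_zero.mpr (div_self hQA.ne')
    have hflip : ∀ ω, Real.log (Q ω / p ω) = - Real.log (p ω / Q ω) := by
      intro ω
      rw [← Real.log_inv, inv_div]
    have : ∑ ω ∈ A, p ω * (Real.log (Q ω / p ω) - Real.log QA)
        = -(∑ ω ∈ A, p ω * Real.log (p ω / Q ω)) - Real.log QA := by
      have ht : ∀ ω, p ω * (Real.log (Q ω / p ω) - Real.log QA)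
          = -(p ω * Real.log (p ω / Q ω)) - p ω * Real.log QA := by
        intro ω; rw [hflip ω]; ring
      simp only [ht]
      rw [Finset.sum_sub_distrib, ← Finset.sum_neg_distrib, ← Finset.sum_mul, hpsum, one_mul]
    rw [this] at key
    linarith
  · -- termwise equality
    rw [← Finset.sum_add_distrib]
    apply Finset.sum_le_sum
    intro ω hω
    rcases eq_or_lt_of_le (hP0 ω) with h0 | h0
    · simp [hp, ← h0]
    · have hQω : 0 < Q ω := habs ω h0
      have hpω : 0 < p ω := div_pos h0 hs0
      rw [← mul_add, Real.log_div hpω.ne' hQω.ne', Real.log_div hpω.ne' h0.ne',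
        Real.log_div h0.ne' hQω.ne']
      ring_nf
      exact le_refl _
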